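/- There exists a function i : ℕ × ℕ × ℕ → ℕ with i(n,l,k) > 0 (defined for 0 < l and k < l) such that for every n, every 0 < l, every 0 < m ≤ l, and every sequence of finite sets ⟨F_k : k < m⟩ with |F_k| = i(n+1,l,k), whenever the product ∏_{k<m} F_k is partitioned into two pieces X_0 ∪ X_1, there exist j ∈ {0,1} and subsets E_k ⊆ F_k with |E_k| = i(n,l,k) for all k < m such that ∏_{k<m} E_k ⊆ X_j. -/

import Mathlib

/-- The product set `∏_{k<m} F k`, encoded as the set of functions `s : ℕ → ℕ`
with `s k ∈ F k` for `k < m` and `s k = 0` for `k ≥ m`. -/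
def prodSet (F : ℕ → Finset ℕ) (m : ℕ) : Set (ℕ → ℕ) :=
  {s | (∀ k, k < m → s k ∈ F k) ∧ ∀ k, m ≤ k → s k = 0}

attribute [local instance] Classical.propDecidable

/-- Auxiliary product: `Pfun f k = ∏_{j<k} stepF f j`. -/
def Pfun (f : ℕ → ℕ) : ℕ → ℕ
  | 0 => 1
  | k + 1 => Pfun f k * (f k * 2 ^ Pfun f k)

/-- One step of the size function. -/
def stepF (f : ℕ → ℕ) (k : ℕ) : ℕ := f k * 2 ^ Pfun f k

/-- The size function. -/
def iF (n : ℕ) : ℕ → ℕ := stepF^[n] (fun _ => 1)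

lemma iF_succ (n : ℕ) : iF (n + 1) = stepF (iF n) :=
  Function.iterate_succ_apply' _ _ _

lemma Pfun_eq (f : ℕ → ℕ) (k : ℕ) :
    Pfun f k = ∏ j ∈ Finset.range k, stepF f j := by
  induction k with
  | zero => simp [Pfun]
  | succ k ih => rw [Pfun, Finset.prod_range_succ, stepF, ih]

lemma iF_pos (n k : ℕ) : 0 < iF n k := by
  induction n generalizing k with
  | zero => simp [iF]
  | succ n ih =>
    rw [iF_succ, stepF]
    exact Nat.mul_pos (ih k) (Nat.pow_pos (by norm_num))

/-- Finset version of the product set. -/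
noncomputable def prodF (F : ℕ → Finset ℕ) : ℕ → Finset (ℕ → ℕ)
  | 0 => {fun _ => 0}
  | m + 1 => ((prodF F m) ×ˢ F m).image fun p => Function.update p.1 m p.2

lemma card_prodF (F : ℕ → Finset ℕ) (m : ℕ) :
    (prodF F m).card ≤ ∏ j ∈ Finset.range m, (F j).card := by
  induction m with
  | zero => simp [prodF]
  | succ m ih =>
    calc (prodF F (m + 1)).card ≤ ((prodF F m) ×ˢ F m).card := by
          rw [prodF]; exact Finset.card_image_le
      _ = (prodF F m).card * (F m).card := Finset.card_product _ _
      _ ≤ (∏ j ∈ Finset.range m, (F j).card) * (F m).card :=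
          Nat.mul_le_mul_right _ ih
      _ = ∏ j ∈ Finset.range (m + 1), (F j).card := (Finset.prod_range_succ _ _).symm

lemma mem_prodF (F : ℕ → Finset ℕ) (m : ℕ) {s : ℕ → ℕ}
    (hs : s ∈ prodSet F m) : s ∈ prodF F m := by
  induction m generalizing s with
  | zero =>
    have : s = fun _ => 0 := funext fun k => hs.2 k (Nat.zero_le k)
    simp [prodF, this]
  | succ m ih =>
    have hs' : Function.update s m 0 ∈ prodSet F m := by
      constructor
      · intro k hk
        rw [Function.update_of_ne (Nat.ne_of_lt hk)]
        exact hs.1 k (Nat.lt_succ_of_lt hk)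
      · intro k hk
        rcases Nat.eq_or_lt_of_le hk with h | h
        · rw [← h, Function.update_self]
        · rw [Function.update_of_ne (Nat.ne_of_gt h)]
          exact hs.2 k h
    refine Finset.mem_image.2 ⟨(Function.update s m 0, s m), ?_, ?_⟩
    · exact Finset.mem_product.2 ⟨ih hs', hs.1 m (Nat.lt_succ_self m)⟩
    · funext k
      by_cases hk : k = m
      · subst hk; simp
      · simp [Function.update_of_ne hk]

/-- The main inductive lemma. -/
lemma key (m n : ℕ) (F : ℕ → Finset ℕ)
    (hF : ∀ k, k < m → (F k).card = iF (n + 1) k)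
    (X₀ X₁ : Set (ℕ → ℕ)) (hcov : prodSet F m ⊆ X₀ ∪ X₁) :
    ∃ E : ℕ → Finset ℕ,
      (∀ k, k < m → E k ⊆ F k ∧ (E k).card = iF n k) ∧
      (prodSet E m ⊆ X₀ ∨ prodSet E m ⊆ X₁) := by
  induction m generalizing X₀ X₁ with
  | zero =>
    have hz : (fun _ => 0) ∈ prodSet F 0 := ⟨fun k hk => absurd hk (Nat.not_lt_zero k),
      fun k _ => rfl⟩
    have heq : ∀ s ∈ prodSet (fun _ => (∅ : Finset ℕ)) 0, s = fun _ => 0 := by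
      intro s hs
      exact funext fun k => hs.2 k (Nat.zero_le k)
    rcases hcov hz with h | h
    · exact ⟨fun _ => ∅, fun k hk => absurd hk (Nat.not_lt_zero k),
        Or.inl fun s hs => (heq s hs) ▸ h⟩
    · exact ⟨fun _ => ∅, fun k hk => absurd hk (Nat.not_lt_zero k),
        Or.inr fun s hs => (heq s hs) ▸ h⟩
  | succ m ih =>
    set P := prodF F m with hP
    set c : ℕ → Finset (ℕ → ℕ) := fun a => P.filter (fun s => Function.update s m a ∈ X₀)
      with hc
    have hmaps : ∀ a ∈ F m, c a ∈ P.powerset := fun a _ =>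
      Finset.mem_powerset.2 (Finset.filter_subset _ _)
    have hprodcard : ∏ j ∈ Finset.range m, (F j).card
        = ∏ j ∈ Finset.range m, iF (n + 1) j :=
      Finset.prod_congr rfl fun j hj => hF j (Nat.lt_succ_of_lt (Finset.mem_range.1 hj))
    have hcard : P.powerset.card * iF n m ≤ (F m).card := by
      rw [Finset.card_powerset, hF m (Nat.lt_succ_self m), iF_succ, stepF,
        Pfun_eq, ← iF_succ, Nat.mul_comm (iF n m)]
      refine Nat.mul_le_mul_right _ (Nat.pow_le_pow_right (by norm_num) ?_)
      calc P.card ≤ ∏ j ∈ Finset.range m, (F j).card := card_prodF F m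
        _ = ∏ j ∈ Finset.range m, iF (n + 1) j := hprodcard
    obtain ⟨Y, _, hYcard⟩ :=
      Finset.exists_le_card_fiber_of_mul_le_card_of_maps_to hmaps
        ⟨∅, Finset.empty_mem_powerset _⟩ hcard
    set Em := (F m).filter (fun a => c a = Y) with hEm
    obtain ⟨Em', hEm'sub, hEm'card⟩ := Finset.exists_subset_card_eq hYcard
    have hEm'F : Em' ⊆ F m := hEm'sub.trans (Finset.filter_subset _ _)
    set X₀' : Set (ℕ → ℕ) := {s | s ∈ Y} with hX0'
    set X₁' : Set (ℕ → ℕ) := {s | s ∈ P ∧ s ∉ Y} with hX1'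
    have hcov' : prodSet F m ⊆ X₀' ∪ X₁' := by
      intro s hs
      by_cases h : s ∈ Y
      · exact Or.inl h
      · exact Or.inr ⟨mem_prodF F m hs, h⟩
    obtain ⟨E, hE, hmono⟩ := ih (fun k hk => hF k (Nat.lt_succ_of_lt hk)) X₀' X₁' hcov'
    refine ⟨fun k => if k = m then Em' else E k, ?_, ?_⟩
    · intro k hk
      by_cases h : k = m
      · subst h; simpa using ⟨hEm'F, hEm'card⟩
      · have hk' : k < m := Nat.lt_of_le_of_ne (Nat.lt_succ_iff.1 hk) h
        simpa [h] using hE k hk'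
    · -- membership facts
      have hrestrict : ∀ s : ℕ → ℕ,
          s ∈ prodSet (fun k => if k = m then Em' else E k) (m + 1) →
          Function.update s m 0 ∈ prodSet E m ∧ s m ∈ Em' ∧
          Function.update (Function.update s m 0) m (s m) = s := by
        intro s hs
        refine ⟨⟨?_, ?_⟩, ?_, ?_⟩
        · intro k hk
          rw [Function.update_of_ne (Nat.ne_of_lt hk)]
          have := hs.1 k (Nat.lt_succ_of_lt hk)
          simpa [Nat.ne_of_lt hk] using this
        · intro k hk
          rcases Nat.eq_or_lt_of_le hk with h | h
          · rw [← h, Function.update_self]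
          · rw [Function.update_of_ne (Nat.ne_of_gt h)]
            exact hs.2 k h
        · have := hs.1 m (Nat.lt_succ_self m)
          simpa using this
        · funext k
          by_cases hk : k = m
          · subst hk; simp
          · simp [Function.update_of_ne hk]
      have hEsubF : ∀ k, k < m → E k ⊆ F k := fun k hk => (hE k hk).1
      rcases hmono with hm | hm
      · -- monochromatic in X₀
        refine Or.inl ?_
        intro s hs
        obtain ⟨h1, h2, h3⟩ := hrestrict s hs
        have hY : Function.update s m 0 ∈ Y := hm h1
        have hcY : c (s m) = Y := (Finset.mem_filter.1 (hEm'sub h2)).2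
        have : Function.update s m 0 ∈ c (s m) := hcY ▸ hY
        have := (Finset.mem_filter.1 this).2
        rwa [h3] at this
      · -- monochromatic in X₁
        refine Or.inr ?_
        intro s hs
        obtain ⟨h1, h2, h3⟩ := hrestrict s hs
        have hX1 : Function.update s m 0 ∈ X₁' := hm h1
        have hsF : s ∈ prodSet F (m + 1) := by
          constructor
          · intro k hk
            rcases Nat.lt_succ_iff_lt_or_eq.1 hk with h | h
            · exact hEsubF k h (by simpa [Nat.ne_of_lt h] using hs.1 k hk)
            · subst h
              exact hEm'F (by simpa using hs.1 k hk)
          · exact hs.2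
        rcases hcov hsF with h | h
        · exfalso
          have hmem : Function.update s m 0 ∈ c (s m) := by
            refine Finset.mem_filter.2 ⟨hX1.1, ?_⟩
            rwa [h3]
          have hcY : c (s m) = Y := (Finset.mem_filter.1 (hEm'sub h2)).2
          exact hX1.2 (hcY ▸ hmem)
        · exact h

/-- Polarized Ramsey theorem for finite products of finite sets. -/
theorem polarized_partition :
    ∃ i : ℕ → ℕ → ℕ → ℕ,
      (∀ n l k, 0 < l → k < l → 0 < i n l k) ∧
      (∀ n l m, 0 < l → 0 < m → m ≤ l →
        ∀ F : ℕ → Finset ℕ, (∀ k, k < m → (F k).card = i (n + 1) l k) →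
          ∀ X₀ X₁ : Set (ℕ → ℕ), prodSet F m ⊆ X₀ ∪ X₁ →
            ∃ E : ℕ → Finset ℕ,
              (∀ k, k < m → E k ⊆ F k ∧ (E k).card = i n l k) ∧
              (prodSet E m ⊆ X₀ ∨ prodSet E m ⊆ X₁)) := by
  refine ⟨fun n _ k => iF n k, fun n l k _ _ => iF_pos n k, ?_⟩
  intro n l m _ _ _ F hF X₀ X₁ hcov
  exact key m n F hF X₀ X₁ hcov
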